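/- Under the (δ, L, μ)-model assumption f(x) + ψ_k(y, x) + (μ/2)‖y − x‖² − δ₁^k ≤ f(y) ≤ f(x) + ψ_k(y, x) + (L/2)‖y − x‖² + δ₂^k for all x, y ∈ Q (with L ≥ μ ≥ 0, each ψ_k(·,x) convex, ψ_k(x,x)=0), the iterates x_{k+1} = argmin_{x∈Q}[ψ_k(x, x_k) + (L/2)‖x − x_k‖²] satisfy, with q = 1 − μ/L, the recursion (1/2)‖x_* − x_{k+1}‖² ≤ (1/L)(f(x_*) − f(x_{k+1}) + δ₁^k + δ₂^k) + (q/2)‖x_* − x_k‖², and hence after N steps (1/2)‖x_* − x_N‖² ≤ Σ_{i=1}^{N} (q^{N−i}/L)(f(x_*) − f(x_i) + δ₁^{i−1} + δ₂^{i−1}) + (q^N/2)‖x_* − x_0‖². -/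

import Mathlib

open Filter Topology

variable {E : Type*} [NormedAddCommGroup E] [InnerProductSpace ℝ E]

lemma combo_sq (a b : ℝ) (hab : a + b = 1) (p q : E) :
    ‖a • p + b • q‖ ^ 2 = a * ‖p‖ ^ 2 + b * ‖q‖ ^ 2 - a * b * ‖p - q‖ ^ 2 := by
  have hb : b = 1 - a := by linarith
  subst hb
  rw [← real_inner_self_eq_norm_sq, ← real_inner_self_eq_norm_sq,
    ← real_inner_self_eq_norm_sq, ← real_inner_self_eq_norm_sq]
  simp only [inner_add_add_self, inner_sub_sub_self, real_inner_smul_left,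
    real_inner_smul_right]
  ring

lemma strong_min {Q : Set E} (hQ : Convex ℝ Q) (g : E → ℝ) (hg : ConvexOn ℝ Q g)
    (L : ℝ) (_hL : 0 < L) (x0 u : E) (hu : u ∈ Q)
    (hmin : ∀ z ∈ Q, g u + (L / 2) * ‖u - x0‖ ^ 2 ≤ g z + (L / 2) * ‖z - x0‖ ^ 2)
    (z : E) (hz : z ∈ Q) :
    g u + (L / 2) * ‖u - x0‖ ^ 2 + (L / 2) * ‖z - u‖ ^ 2 ≤
      g z + (L / 2) * ‖z - x0‖ ^ 2 := by
  have key : ∀ t : ℝ, t ∈ Set.Ioo (0:ℝ) 1 →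
      g u + (L / 2) * ‖u - x0‖ ^ 2 + (L / 2) * (1 - t) * ‖z - u‖ ^ 2 ≤
        g z + (L / 2) * ‖z - x0‖ ^ 2 := by
    rintro t ⟨ht0, ht1⟩
    set a := 1 - t with ha
    have ha0 : 0 ≤ a := by simp [ha]; linarith
    have hab : a + t = 1 := by ring
    have hmem : a • u + t • z ∈ Q := hQ hu hz ha0 ht0.le hab
    have h1 := hmin _ hmem
    have h2 := hg.2 hu hz ha0 ht0.le hab
    have h3 : ‖a • u + t • z - x0‖ ^ 2 =
        a * ‖u - x0‖ ^ 2 + t * ‖z - x0‖ ^ 2 - a * t * ‖u - z‖ ^ 2 := by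
      have : a • u + t • z - x0 = a • (u - x0) + t • (z - x0) := by
        simp only [ha]; module
      rw [this, combo_sq a t hab, show (u - x0) - (z - x0) = u - z by abel]
    have h4 : ‖u - z‖ = ‖z - u‖ := norm_sub_rev _ _
    simp only [ha, smul_eq_mul] at h1 h2 h3 ⊢
    rw [h3, h4] at h1
    have h5 : t * (g u + L / 2 * ‖u - x0‖ ^ 2 + L / 2 * (1 - t) * ‖z - u‖ ^ 2) ≤
        t * (g z + L / 2 * ‖z - x0‖ ^ 2) := by nlinarith
    exact le_of_mul_le_mul_left h5 ht0
  have htend : Tendsto (fun t : ℝ => g u + (L / 2) * ‖u - x0‖ ^ 2 +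
      (L / 2) * (1 - t) * ‖z - u‖ ^ 2) (𝓝[>] 0)
      (𝓝 (g u + (L / 2) * ‖u - x0‖ ^ 2 + (L / 2) * ‖z - u‖ ^ 2)) := by
    have hc : Continuous (fun t : ℝ => g u + (L / 2) * ‖u - x0‖ ^ 2 +
        (L / 2) * (1 - t) * ‖z - u‖ ^ 2) := by continuity
    have h := (hc.tendsto 0).mono_left (nhdsWithin_le_nhds (s := Set.Ioi (0:ℝ)))
    simpa using h
  refine le_of_tendsto htend ?_
  filter_upwards [Ioo_mem_nhdsGT_of_mem (Set.mem_Ico.2 ⟨le_refl 0, one_pos⟩)] with t ht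
  exact key t ht

theorem gm_recursion (n : ℕ) (f : EuclideanSpace ℝ (Fin n) → ℝ)
    (Q : Set (EuclideanSpace ℝ (Fin n))) (hQconv : Convex ℝ Q) (hQclosed : IsClosed Q)
    (ψ : ℕ → EuclideanSpace ℝ (Fin n) → EuclideanSpace ℝ (Fin n) → ℝ)
    (δ₁ δ₂ : ℕ → ℝ) (μ L : ℝ) (hμ : 0 ≤ μ) (hμL : μ ≤ L) (hL : 0 < L)
    (hψconv : ∀ k, ∀ x ∈ Q, ConvexOn ℝ Q (fun y => ψ k y x))
    (hψ0 : ∀ k, ∀ x ∈ Q, ψ k x x = 0)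
    (hlow : ∀ k, ∀ x ∈ Q, ∀ y ∈ Q,
      f x + ψ k y x + (μ / 2) * ‖y - x‖ ^ 2 - δ₁ k ≤ f y)
    (hup : ∀ k, ∀ x ∈ Q, ∀ y ∈ Q,
      f y ≤ f x + ψ k y x + (L / 2) * ‖y - x‖ ^ 2 + δ₂ k)
    (x : ℕ → EuclideanSpace ℝ (Fin n)) (hx : ∀ k, x k ∈ Q)
    (hargmin : ∀ k, ∀ z ∈ Q,
      ψ k (x (k + 1)) (x k) + (L / 2) * ‖x (k + 1) - x k‖ ^ 2 ≤
      ψ k z (x k) + (L / 2) * ‖z - x k‖ ^ 2)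
    (xstar : EuclideanSpace ℝ (Fin n)) (hxstar : xstar ∈ Q)
    (hmin : ∀ z ∈ Q, f xstar ≤ f z) :
    (∀ k : ℕ,
      (1 / 2) * ‖xstar - x (k + 1)‖ ^ 2 ≤
        (1 / L) * (f xstar - f (x (k + 1)) + δ₁ k + δ₂ k)
          + ((1 - μ / L) / 2) * ‖xstar - x k‖ ^ 2) ∧
    (∀ N : ℕ, 1 ≤ N →
      (1 / 2) * ‖xstar - x N‖ ^ 2 ≤
        (∑ i ∈ Finset.Icc 1 N,
          ((1 - μ / L) ^ (N - i) / L) * (f xstar - f (x i) + δ₁ (i - 1) + δ₂ (i - 1)))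
          + ((1 - μ / L) ^ N / 2) * ‖xstar - x 0‖ ^ 2) := by
  set q : ℝ := 1 - μ / L with hqdef
  have hq0 : 0 ≤ q := by
    have h : μ / L ≤ 1 := (div_le_one hL).2 hμL
    rw [hqdef]; linarith
  have step : ∀ k : ℕ,
      (1 / 2) * ‖xstar - x (k + 1)‖ ^ 2 ≤
        (1 / L) * (f xstar - f (x (k + 1)) + δ₁ k + δ₂ k)
          + (q / 2) * ‖xstar - x k‖ ^ 2 := by
    intro k
    have hsm := strong_min hQconv (fun y => ψ k y (x k)) (hψconv k (x k) (hx k))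
      L hL (x k) (x (k + 1)) (hx (k + 1)) (hargmin k) xstar hxstar
    have h1 := hup k (x k) (hx k) (x (k + 1)) (hx (k + 1))
    have h2 := hlow k (x k) (hx k) xstar hxstar
    have hstep : L / 2 * ‖xstar - x (k + 1)‖ ^ 2 ≤
        (f xstar - f (x (k + 1)) + δ₁ k + δ₂ k) + (L - μ) / 2 * ‖xstar - x k‖ ^ 2 := by
      linarith
    have hLinv : (0:ℝ) ≤ 1 / L := by positivity
    have := mul_le_mul_of_nonneg_left hstep hLinv
    have hLne : L ≠ 0 := ne_of_gt hL
    calc (1 / 2) * ‖xstar - x (k + 1)‖ ^ 2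
        = (1 / L) * (L / 2 * ‖xstar - x (k + 1)‖ ^ 2) := by field_simp
      _ ≤ (1 / L) * ((f xstar - f (x (k + 1)) + δ₁ k + δ₂ k)
            + (L - μ) / 2 * ‖xstar - x k‖ ^ 2) := this
      _ = (1 / L) * (f xstar - f (x (k + 1)) + δ₁ k + δ₂ k)
            + (q / 2) * ‖xstar - x k‖ ^ 2 := by
          rw [hqdef]; field_simp
  refine ⟨step, ?_⟩
  have tel : ∀ N : ℕ,
      (1 / 2) * ‖xstar - x N‖ ^ 2 ≤
        (∑ i ∈ Finset.Icc 1 N,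
          (q ^ (N - i) / L) * (f xstar - f (x i) + δ₁ (i - 1) + δ₂ (i - 1)))
          + (q ^ N / 2) * ‖xstar - x 0‖ ^ 2 := by
    intro N
    induction N with
    | zero => simp
    | succ N ih =>
      have h1 := step N
      have h2 := mul_le_mul_of_nonneg_left ih hq0
      have hsum : ∑ i ∈ Finset.Icc 1 (N + 1),
          (q ^ (N + 1 - i) / L) * (f xstar - f (x i) + δ₁ (i - 1) + δ₂ (i - 1))
          = (1 / L) * (f xstar - f (x (N + 1)) + δ₁ N + δ₂ N)
            + q * ∑ i ∈ Finset.Icc 1 N,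
              (q ^ (N - i) / L) * (f xstar - f (x i) + δ₁ (i - 1) + δ₂ (i - 1)) := by
        rw [Finset.sum_Icc_succ_top (Nat.succ_le_succ (Nat.zero_le N)), Finset.mul_sum]
        have hc : ∀ i ∈ Finset.Icc 1 N,
            (q ^ (N + 1 - i) / L) * (f xstar - f (x i) + δ₁ (i - 1) + δ₂ (i - 1))
            = q * ((q ^ (N - i) / L) * (f xstar - f (x i) + δ₁ (i - 1) + δ₂ (i - 1))) := by
          intro i hi
          have hiN : i ≤ N := (Finset.mem_Icc.1 hi).2
          have : N + 1 - i = (N - i) + 1 := by omega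
          rw [this, pow_succ]; ring
        rw [Finset.sum_congr rfl hc]
        simp
        ring
      rw [hsum]
      have h3 : q * (q ^ N / 2 * ‖xstar - x 0‖ ^ 2)
          = q ^ (N + 1) / 2 * ‖xstar - x 0‖ ^ 2 := by rw [pow_succ]; ring
      linarith [h1, h2, h3]
  exact fun N _ => tel N
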